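/- Let M be a finite subset of ℕ of cardinality m, arranged in a two-row Young tableau R with first row R¹_1, …, R¹_ℓ and second row R²_1, …, R²_{m−ℓ} (each element of M appearing exactly once, ℓ ≥ m/2). Define the 2ℓ-covector α_R := (dxy_{R¹_1} − dxy_{R²_1}) ∧ ⋯ ∧ (dxy_{R¹_{m−ℓ}} − dxy_{R²_{m−ℓ}}) ∧ dxy_{R¹_{m−ℓ+1}} ∧ ⋯ ∧ dxy_{R¹_ℓ} on ℝ^{2n}, where dxy_i := dx_i ∧ dy_i. Then α_R ∧ ∑_{i ∈ M} dx_i ∧ dy_i = 0. -/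

import Mathlib

set_option synthInstance.maxHeartbeats 1000000
set_option maxHeartbeats 1000000
/-- The space of covectors: the dual of `ℝ^{2n} = ℝ^n_x × ℝ^n_y`. -/
abbrev CovectorSpace (n : ℕ) : Type _ :=
  Module.Dual ℝ ((Fin n → ℝ) × (Fin n → ℝ))

/-- The coordinate covector `dx_i` on `ℝ^{2n}`. -/
noncomputable def dxCov (n : ℕ) (i : Fin n) : CovectorSpace n :=
  (LinearMap.proj i).comp (LinearMap.fst ℝ (Fin n → ℝ) (Fin n → ℝ))

/-- The coordinate covector `dy_i` on `ℝ^{2n}`. -/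
noncomputable def dyCov (n : ℕ) (i : Fin n) : CovectorSpace n :=
  (LinearMap.proj i).comp (LinearMap.snd ℝ (Fin n → ℝ) (Fin n → ℝ))

/-- The 2-covector `dxy_i := dx_i ∧ dy_i`. -/
noncomputable def dxyCov (n : ℕ) (i : Fin n) : ExteriorAlgebra ℝ (CovectorSpace n) :=
  ExteriorAlgebra.ι ℝ (dxCov n i) * ExteriorAlgebra.ι ℝ (dyCov n i)

/-- The `2ℓ`-covector `α_R` associated with a two-row tableau with first row `R¹ : Fin ℓ` and
second row `R² : Fin (m - ℓ)`: the product of the differences `dxy_{R¹_j} - dxy_{R²_j}` for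
`j < m - ℓ` followed by the factors `dxy_{R¹_j}` for `m - ℓ ≤ j < ℓ`. -/
noncomputable def alphaCov (n m ℓ : ℕ) (R1 : Fin ℓ → Fin n) (R2 : Fin (m - ℓ) → Fin n) :
    ExteriorAlgebra ℝ (CovectorSpace n) :=
  (List.ofFn fun j : Fin ℓ =>
    if h : (j : ℕ) < m - ℓ then dxyCov n (R1 j) - dxyCov n (R2 ⟨(j : ℕ), h⟩)
    else dxyCov n (R1 j)).prod

/-- A neg-swap form of `ι_add_mul_swap`. -/
lemma iota_swap {n : ℕ} (x y : CovectorSpace n) :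
    ExteriorAlgebra.ι ℝ x * ExteriorAlgebra.ι ℝ y
      = -(ExteriorAlgebra.ι ℝ y * ExteriorAlgebra.ι ℝ x) :=
  eq_neg_of_add_eq_zero_left (ExteriorAlgebra.ι_add_mul_swap (R := ℝ) x y)

/-- An even product of two `ι`'s commutes with any `ι`. -/
lemma iota_pair_comm {n : ℕ} (x y z : CovectorSpace n) :
    Commute (ExteriorAlgebra.ι ℝ x * ExteriorAlgebra.ι ℝ y) (ExteriorAlgebra.ι ℝ z) := by
  unfold Commute SemiconjBy
  rw [mul_assoc, iota_swap y z, mul_neg, ← mul_assoc, iota_swap x z, neg_mul, neg_neg,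
    mul_assoc]

/-- `dxy_i` and `dxy_j` commute. -/
lemma dxy_commute {n : ℕ} (i j : Fin n) : Commute (dxyCov n i) (dxyCov n j) := by
  unfold dxyCov
  exact (iota_pair_comm _ _ _).mul_right (iota_pair_comm _ _ _)

/-- `dxy_i * dxy_i = 0`. -/
lemma dxy_sq_zero {n : ℕ} (i : Fin n) : dxyCov n i * dxyCov n i = 0 := by
  unfold dxyCov
  rw [mul_assoc, ← mul_assoc (ExteriorAlgebra.ι ℝ (dyCov n i)),
    iota_swap (dyCov n i) (dxCov n i)]
  simp [mul_assoc, ExteriorAlgebra.ι_sq_zero]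

lemma list_prod_mul_eq_zero {A : Type*} [Ring A] (s : A) :
    ∀ (L : List A), (∀ x ∈ L, Commute s x) → (∃ f ∈ L, f * s = 0) → L.prod * s = 0 := by
  intro L
  induction L with
  | nil => rintro _ ⟨f, hf, _⟩; simp at hf
  | cons x t ih =>
    rintro hc ⟨f, hf, h0⟩
    rcases List.mem_cons.mp hf with rfl | hft
    · have hct : Commute s t.prod :=
        Commute.list_prod_right _ _ (fun y hy => hc y (List.mem_cons_of_mem _ hy))
      rw [List.prod_cons, mul_assoc, ← hct.eq, ← mul_assoc, h0, zero_mul]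
    · rw [List.prod_cons, mul_assoc,
        ih (fun y hy => hc y (List.mem_cons_of_mem _ hy)) ⟨f, hft, h0⟩, mul_zero]

theorem alpha_wedge_sum_eq_zero
    (n m ℓ : ℕ) (hℓm : ℓ ≤ m) (hmℓ : m ≤ 2 * ℓ)
    (M : Finset (Fin n)) (hM : M.card = m)
    (R1 : Fin ℓ → Fin n) (R2 : Fin (m - ℓ) → Fin n)
    (hinj : Function.Injective (Sum.elim R1 R2))
    (hrange : Set.range R1 ∪ Set.range R2 = (M : Set (Fin n))) :
    alphaCov n m ℓ R1 R2 * ∑ i ∈ M, dxyCov n i = 0 := by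
  classical
  set d : Fin n → ExteriorAlgebra ℝ (CovectorSpace n) := dxyCov n with hd
  have hR1 : Function.Injective R1 := fun a b h => by
    have := hinj (a₁ := Sum.inl a) (a₂ := Sum.inl b) (by simpa using h)
    simpa using this
  have hR2 : Function.Injective R2 := fun a b h => by
    have := hinj (a₁ := Sum.inr a) (a₂ := Sum.inr b) (by simpa using h)
    simpa using this
  have hdisj : ∀ a b, R1 a ≠ R2 b := fun a b h => by
    have := hinj (a₁ := Sum.inl a) (a₂ := Sum.inr b) (by simpa using h)
    simpa using this
  have hMeq : M = (Finset.univ.image R1) ∪ (Finset.univ.image R2) := by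
    apply Finset.coe_injective
    simp only [Finset.coe_union, Finset.coe_image, Finset.coe_univ, Set.image_univ]
    exact hrange.symm
  have hdisjF : Disjoint (Finset.univ.image R1) (Finset.univ.image R2) := by
    rw [Finset.disjoint_left]
    rintro x hx1 hx2
    obtain ⟨a, -, rfl⟩ := Finset.mem_image.mp hx1
    obtain ⟨b, -, hb⟩ := Finset.mem_image.mp hx2
    exact hdisj a b hb.symm
  -- the grouped summands
  set s : Fin ℓ → ExteriorAlgebra ℝ (CovectorSpace n) := fun j =>
    if h : (j : ℕ) < m - ℓ then d (R1 j) + d (R2 ⟨(j : ℕ), h⟩) else d (R1 j) with hs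
  have hspos : ∀ (j : Fin ℓ) (h : (j : ℕ) < m - ℓ),
      s j = d (R1 j) + d (R2 ⟨(j : ℕ), h⟩) := by
    intro j h; simp only [hs]; rw [dif_pos h]
  have hsneg : ∀ (j : Fin ℓ), ¬ (j : ℕ) < m - ℓ → s j = d (R1 j) := by
    intro j h; simp only [hs]; rw [dif_neg h]
  -- the list factors
  set F : Fin ℓ → ExteriorAlgebra ℝ (CovectorSpace n) := fun j =>
    if h : (j : ℕ) < m - ℓ then d (R1 j) - d (R2 ⟨(j : ℕ), h⟩) else d (R1 j) with hF
  have hFpos : ∀ (j : Fin ℓ) (h : (j : ℕ) < m - ℓ),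
      F j = d (R1 j) - d (R2 ⟨(j : ℕ), h⟩) := by
    intro j h; simp only [hF]; rw [dif_pos h]
  have hFneg : ∀ (j : Fin ℓ), ¬ (j : ℕ) < m - ℓ → F j = d (R1 j) := by
    intro j h; simp only [hF]; rw [dif_neg h]
  have halpha : alphaCov n m ℓ R1 R2 = (List.ofFn F).prod := rfl
  -- rewrite the sum over M as the sum of grouped summands
  have hsum : ∑ i ∈ M, d i = ∑ j : Fin ℓ, s j := by
    rw [hMeq, Finset.sum_union hdisjF, Finset.sum_image (fun a _ b _ h => hR1 h),
      Finset.sum_image (fun a _ b _ h => hR2 h)]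
    have hpad : ∀ j : Fin ℓ,
        s j = d (R1 j) + (if h : (j : ℕ) < m - ℓ then d (R2 ⟨(j : ℕ), h⟩) else 0) := by
      intro j
      by_cases h : (j : ℕ) < m - ℓ
      · rw [hspos j h, dif_pos h]
      · rw [hsneg j h, dif_neg h, add_zero]
    rw [Finset.sum_congr rfl (fun j _ => hpad j), Finset.sum_add_distrib]
    congr 1
    have key : ∑ j : Fin ℓ, (if h : (j : ℕ) < m - ℓ then d (R2 ⟨(j : ℕ), h⟩) else 0)
        = ∑ j ∈ Finset.range ℓ, (if h : j < m - ℓ then d (R2 ⟨j, h⟩) else 0) :=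
      Fin.sum_univ_eq_sum_range (fun j => if h : j < m - ℓ then d (R2 ⟨j, h⟩) else 0) ℓ
    have key2 : ∑ j : Fin (m - ℓ), d (R2 j)
        = ∑ j ∈ Finset.range (m - ℓ), (if h : j < m - ℓ then d (R2 ⟨j, h⟩) else 0) := by
      rw [← Fin.sum_univ_eq_sum_range
        (fun j => if h : j < m - ℓ then d (R2 ⟨j, h⟩) else 0) (m - ℓ)]
      exact Finset.sum_congr rfl fun j _ => by simp [j.is_lt]
    rw [key2, key]
    have hle : m - ℓ ≤ ℓ := by omega
    apply Finset.sum_subset (Finset.range_subset_range.mpr hle)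
    intro x _ hx
    rw [Finset.mem_range, not_lt] at hx
    rw [dif_neg (by omega)]
  rw [halpha, hsum, Finset.mul_sum]
  apply Finset.sum_eq_zero
  intro j _
  have hscomm : ∀ i : Fin n, Commute (s j) (d i) := by
    intro i
    by_cases h : (j : ℕ) < m - ℓ
    · rw [hspos j h]; exact ((dxy_commute _ i).add_left (dxy_commute _ i))
    · rw [hsneg j h]; exact dxy_commute _ i
  apply list_prod_mul_eq_zero
  · intro x hx
    obtain ⟨k, rfl⟩ := List.mem_ofFn.mp hx
    by_cases h : (k : ℕ) < m - ℓ
    · rw [hFpos k h]; exact (hscomm _).sub_right (hscomm _)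
    · rw [hFneg k h]; exact hscomm _
  · refine ⟨F j, List.mem_ofFn.mpr ⟨j, rfl⟩, ?_⟩
    by_cases h : (j : ℕ) < m - ℓ
    · rw [hFpos j h, hspos j h]
      have hc := (dxy_commute (R1 j) (R2 ⟨(j : ℕ), h⟩)).eq
      have h1 := dxy_sq_zero (R1 j)
      have h2 := dxy_sq_zero (R2 ⟨(j : ℕ), h⟩)
      simp only [← hd] at hc h1 h2
      rw [sub_mul, mul_add, mul_add, h1, h2, hc, zero_add, add_zero, sub_self]
    · rw [hFneg j h, hsneg j h]
      exact dxy_sq_zero (R1 j)
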